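/- Let X̄ be the antichain on n elements (the poset with no order relations), so that Tot_{X̄} is the set of all n! linear orders on {1,…,n}. There exist an invertible matrix U with rational entries indexed by Tot_{X̄}, and a linear ordering of the index set Tot_{X̄}, such that for every filter F on X̄ the conjugated matrix U M_F^{X̄} U^{−1} is upper triangular with respect to that ordering and has integer entries on the diagonal. -/

import Mathlib

attribute [local instance] Classical.propDecidable

/-- On the antichain `{1,…,n}` (no order relations), linear extensions are just the
bijections, i.e. permutations of `Fin n`.  `AProd F P Q` says that the linear order `Q` is
the filter product `F·P`: (i) `F(u) < F(v)` implies `Q(u) < Q(v)`, and (ii) if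
`F(u) = F(v)` then `Q(u) < Q(v)` iff `P(u) < P(v)`. -/
def AProd {n k : ℕ} (F : Fin n → Fin k) (P Q : Equiv.Perm (Fin n)) : Prop :=
  (∀ u v : Fin n, F u < F v → Q u < Q v) ∧
  (∀ u v : Fin n, F u = F v → (Q u < Q v ↔ P u < P v))

/-- The matrix `M_F^{X̄}` for a filter `F` on the `n`-element antichain `X̄`, indexed by
the `n!` linear orders on `X̄`, with `(M_F)_{PQ} = 1` if `Q = F·P` and `0` otherwise. -/
noncomputable def AMat {n k : ℕ} (F : Fin n → Fin k) :
    Matrix (Equiv.Perm (Fin n)) (Equiv.Perm (Fin n)) ℚ :=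
  fun P Q => if AProd F P Q then 1 else 0

namespace AntichainAux

open Finset

/-- Two permutations of `Fin n` inducing the same relative order are equal. -/
lemma perm_eq_of_order_iff {n : ℕ} (Q Q' : Equiv.Perm (Fin n))
    (h : ∀ u v, Q u < Q v ↔ Q' u < Q' v) : Q = Q' := by
  haveI : WellFoundedLT (Fin n) := Finite.to_wellFoundedLT
  have hg : StrictMono (fun i => Q' (Q.symm i)) := by
    intro i j hij
    have : Q (Q.symm i) < Q (Q.symm j) := by simpa using hij
    exact (h _ _).mp this
  have hg' : StrictMono (fun i => Q (Q'.symm i)) := by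
    intro i j hij
    have : Q' (Q'.symm i) < Q' (Q'.symm j) := by simpa using hij
    exact (h _ _).mpr this
  have hid : ∀ i, Q' (Q.symm i) = i := by
    intro i
    have h1 : i ≤ Q' (Q.symm i) := hg.le_apply (x := i)
    have h2 : Q' (Q.symm i) ≤ i := by
      have h3 : Q' (Q.symm i) ≤ Q (Q'.symm (Q' (Q.symm i))) := hg'.le_apply (x := Q' (Q.symm i))
      simpa using h3
    exact le_antisymm h2 h1
  apply Equiv.ext; intro u
  have := hid (Q u)
  rw [Equiv.symm_apply_apply] at this
  exact this.symm

variable {n k : ℕ}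

lemma exists_aprod (F : Fin n → Fin k) (P : Equiv.Perm (Fin n)) :
    ∃ Q, AProd F P Q := by
  classical
  set κ : Fin n → Lex (Fin k × Fin n) := fun u => toLex (F u, P u) with hκdef
  have hκ : Function.Injective κ := by
    intro u v huv
    have : (F u, P u) = (F v, P v) := toLex.injective huv
    exact P.injective (congrArg Prod.snd this)
  have hcard : (Finset.image κ Finset.univ).card = n := by
    rw [Finset.card_image_of_injective _ hκ, Finset.card_univ, Fintype.card_fin]
  set iso := (Finset.image κ Finset.univ).orderIsoOfFin hcard with hisodef
  set f : Fin n → Fin n := fun u => iso.symm ⟨κ u, by simp [Finset.mem_image]⟩ with hfdef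
  have hf : ∀ u v, f u < f v ↔ κ u < κ v := by
    intro u v
    simp only [hfdef]
    rw [← iso.lt_iff_lt]
    simp
  have hinj : Function.Injective f := by
    intro u v huv
    by_contra hne
    rcases (hκ.ne hne).lt_or_gt with h | h
    · have := (hf u v).mpr h; rw [huv] at this; exact lt_irrefl _ this
    · have := (hf v u).mpr h; rw [huv] at this; exact lt_irrefl _ this
  have hlex : ∀ u v, κ u < κ v ↔ (F u < F v ∨ (F u = F v ∧ P u < P v)) := by
    intro u v
    exact Prod.Lex.lt_iff
  refine ⟨Equiv.ofBijective f (Finite.injective_iff_bijective.mp hinj), ?_, ?_⟩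
  · intro u v huv
    show f u < f v
    rw [hf]
    exact (hlex u v).mpr (Or.inl huv)
  · intro u v huv
    show f u < f v ↔ P u < P v
    rw [hf, hlex]
    constructor
    · rintro (h | ⟨-, h⟩)
      · exact absurd huv h.ne
      · exact h
    · intro h; exact Or.inr ⟨huv, h⟩

noncomputable def sortPerm (F : Fin n → Fin k) (P : Equiv.Perm (Fin n)) :
    Equiv.Perm (Fin n) :=
  Classical.choose (exists_aprod F P)

lemma sortPerm_aprod (F : Fin n → Fin k) (P : Equiv.Perm (Fin n)) :
    AProd F P (sortPerm F P) :=
  Classical.choose_spec (exists_aprod F P)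

lemma aprod_iff (F : Fin n → Fin k) (P Q : Equiv.Perm (Fin n)) :
    AProd F P Q ↔ Q = sortPerm F P := by
  constructor
  · intro h
    have h' := sortPerm_aprod F P
    apply perm_eq_of_order_iff
    intro u v
    rcases lt_trichotomy (F u) (F v) with hlt | heq | hgt
    · exact iff_of_true (h.1 u v hlt) (h'.1 u v hlt)
    · rw [h.2 u v heq, h'.2 u v heq]
    · exact iff_of_false (fun hc => asymm hc (h.1 v u hgt))
        (fun hc => asymm hc (h'.1 v u hgt))
  · rintro rfl; exact sortPerm_aprod F P

end AntichainAux

namespace AntichainAux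

variable {n k : ℕ}

/-- Type of "edge sets". -/
abbrev ES (n : ℕ) := Finset (Fin n × Fin n)

/-- The monomial function attached to an edge set. -/
noncomputable def y (E : ES n) : Equiv.Perm (Fin n) → ℚ :=
  fun P => ∏ p ∈ E, (if P p.1 < P p.2 then (1 : ℚ) else 0)

/-- Injective key, compatible with strict inclusion. -/
noncomputable def keyE (E : ES n) : Lex (ℕ × ℕ) :=
  toLex (E.card, ((Fintype.equivFin (ES n)) E : ℕ))

lemma keyE_inj : Function.Injective (keyE (n := n)) := by
  intro E E' h
  have h2 : ((Fintype.equivFin (ES n)) E : ℕ) = ((Fintype.equivFin (ES n)) E' : ℕ) :=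
    congrArg Prod.snd (toLex.injective h)
  exact (Fintype.equivFin (ES n)).injective (Fin.val_injective h2)

lemma keyE_lt_of_ssubset {E E' : ES n} (h : E' ⊂ E) : keyE E' < keyE E := by
  have : E'.card < E.card := Finset.card_lt_card h
  exact Prod.Lex.lt_iff.mpr (Or.inl this)

lemma keyE_le_of_subset {E E' : ES n} (h : E' ⊆ E) : keyE E' ≤ keyE E := by
  rcases eq_or_ne E' E with rfl | hne
  · exact le_refl _
  · exact le_of_lt (keyE_lt_of_ssubset (lt_of_le_of_ne h hne))

/-- The composition operator attached to a filter. -/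
noncomputable def TF (F : Fin n → Fin k) :
    (Equiv.Perm (Fin n) → ℚ) →ₗ[ℚ] (Equiv.Perm (Fin n) → ℚ) :=
  LinearMap.funLeft ℚ ℚ (fun P => sortPerm F P)

lemma AMat_eq_toMatrix (F : Fin n → Fin k) :
    AMat F = LinearMap.toMatrix (Pi.basisFun ℚ (Equiv.Perm (Fin n)))
      (Pi.basisFun ℚ (Equiv.Perm (Fin n))) (TF F) := by
  ext P Q
  rw [LinearMap.toMatrix_apply, Pi.basisFun_apply, Pi.basisFun_repr]
  simp only [TF, LinearMap.funLeft_apply]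
  rw [Pi.single_apply]
  unfold AMat
  rw [aprod_iff]
  by_cases h : Q = sortPerm F P
  · rw [if_pos h, if_pos h.symm]
  · rw [if_neg h, if_neg (fun hc => h hc.symm)]

lemma TF_y_zero (F : Fin n → Fin k) (E : ES n) {p : Fin n × Fin n}
    (hp : p ∈ E) (hlt : F p.2 < F p.1) : TF F (y E) = 0 := by
  funext P
  show y E (sortPerm F P) = 0
  unfold y
  apply Finset.prod_eq_zero hp
  have : sortPerm F P p.2 < sortPerm F P p.1 := (sortPerm_aprod F P).1 _ _ hlt
  rw [if_neg (asymm this)]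

lemma TF_y_filter (F : Fin n → Fin k) (E : ES n)
    (h : ∀ p ∈ E, ¬ F p.2 < F p.1) :
    TF F (y E) = y (E.filter (fun p => F p.1 = F p.2)) := by
  funext P
  show y E (sortPerm F P) = _
  unfold y
  rw [Finset.prod_filter]
  apply Finset.prod_congr rfl
  intro p hp
  by_cases heq : F p.1 = F p.2
  · rw [if_pos heq]
    exact if_congr ((sortPerm_aprod F P).2 p.1 p.2 heq) rfl rfl
  · have hlt : F p.1 < F p.2 := by
      rcases lt_trichotomy (F p.1) (F p.2) with h1 | h1 | h1
      · exact h1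
      · exact absurd h1 heq
      · exact absurd h1 (h p hp)
    rw [if_neg heq, if_pos ((sortPerm_aprod F P).1 _ _ hlt)]

/-- The standard basis vectors are monomials. -/
lemma y_single (τ : Equiv.Perm (Fin n)) :
    y (Finset.univ.filter (fun p : Fin n × Fin n => τ p.1 < τ p.2)) = Pi.single τ 1 := by
  funext P
  rw [Pi.single_apply]
  by_cases h : P = τ
  · subst h
    rw [if_pos rfl]
    apply Finset.prod_eq_one
    intro p hp
    rw [if_pos (Finset.mem_filter.mp hp).2]
  · rw [if_neg h]
    have : ¬ ∀ u v, τ u < τ v → P u < P v := by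
      intro hc
      apply h
      apply perm_eq_of_order_iff
      intro u v
      constructor
      · intro hPuv
        rcases lt_trichotomy (τ u) (τ v) with h1 | h1 | h1
        · exact h1
        · have : u = v := τ.injective h1
          subst this; exact absurd hPuv (lt_irrefl _)
        · exact absurd (hc v u h1) (asymm hPuv)
      · exact hc u v
    push_neg at this
    obtain ⟨u, v, h1, h2⟩ := this
    apply Finset.prod_eq_zero (i := (u, v))
    · simp [h1]
    · rw [if_neg (not_lt.mpr h2)]

end AntichainAux

namespace AntichainAux

open Finset Submodule

variable (n : ℕ)

/-- Greedily chosen edge sets: those whose monomial is not in the span of the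
monomials of smaller key. -/
noncomputable def CS : Set (ES n) :=
  {E | y E ∉ Submodule.span ℚ (y '' {E' | keyE E' < keyE E})}

lemma claim1 : ∀ E : ES n,
    y E ∈ Submodule.span ℚ (y '' {E' | E' ∈ CS n ∧ keyE E' ≤ keyE E}) := by
  have wf : WellFounded (fun a b : ES n => keyE a < keyE b) :=
    InvImage.wf keyE wellFounded_lt
  intro E
  induction E using wf.induction with
  | _ E ih =>
    by_cases hE : E ∈ CS n
    · exact Submodule.subset_span ⟨E, ⟨hE, le_refl _⟩, rfl⟩
    · simp only [CS, Set.mem_setOf_eq, not_not] at hE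
      have hle : Submodule.span ℚ (y '' {E' : ES n | keyE E' < keyE E}) ≤
          Submodule.span ℚ (y '' {E' | E' ∈ CS n ∧ keyE E' ≤ keyE E}) := by
        rw [Submodule.span_le]
        rintro _ ⟨E', hlt, rfl⟩
        have h2 := ih E' hlt
        have h3 : Submodule.span ℚ (y '' {E'' | E'' ∈ CS n ∧ keyE E'' ≤ keyE E'}) ≤
            Submodule.span ℚ (y '' {E'' | E'' ∈ CS n ∧ keyE E'' ≤ keyE E}) :=
          Submodule.span_mono (Set.image_mono
            (fun E'' h => ⟨h.1, le_trans h.2 (le_of_lt hlt)⟩))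
        exact h3 h2
      exact hle hE

lemma indepCS : LinearIndependent ℚ (fun c : CS n => y (c : ES n)) := by
  rw [linearIndependent_iff']
  intro s g hsum i hi
  by_contra hgi
  set t := s.filter (fun j => g j ≠ 0) with ht
  have htne : t.Nonempty := ⟨i, by simp [ht, hi, hgi]⟩
  obtain ⟨m, hmt, hmax⟩ := t.exists_max_image (fun j => keyE (j : ES n)) htne
  have hgm : g m ≠ 0 := (Finset.mem_filter.mp hmt).2
  have hsum' : ∑ j ∈ t, g j • y (j : ES n) = 0 := by
    rw [← hsum, ht]
    apply Finset.sum_filter_of_ne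
    intro x hx hne
    intro hgx
    apply hne
    rw [hgx, zero_smul]
  have hiso : g m • y (m : ES n) = - ∑ j ∈ t.erase m, g j • y (j : ES n) := by
    have := Finset.add_sum_erase t (fun j => g j • y (j : ES n)) hmt
    rw [hsum'] at this
    linear_combination (norm := module) this
  have hym : y (m : ES n) ∈
      Submodule.span ℚ (y '' {E' : ES n | keyE E' < keyE (m : ES n)}) := by
    have hexp : y (m : ES n) = ∑ j ∈ t.erase m, (-(g m)⁻¹ * g j) • y (j : ES n) := by
      have h2 : (g m)⁻¹ • (g m • y (m : ES n)) =
          (g m)⁻¹ • (- ∑ j ∈ t.erase m, g j • y (j : ES n)) := by rw [hiso]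
      rw [smul_smul, inv_mul_cancel₀ hgm, one_smul] at h2
      rw [h2, smul_neg, Finset.smul_sum]
      rw [← Finset.sum_neg_distrib]
      apply Finset.sum_congr rfl
      intro j hj
      rw [smul_smul]
      rw [← neg_smul]
      ring_nf
    rw [hexp]
    apply Submodule.sum_mem
    intro j hj
    apply Submodule.smul_mem
    apply Submodule.subset_span
    refine ⟨(j : ES n), ?_, rfl⟩
    have hjm : j ≠ m := (Finset.mem_erase.mp hj).1
    have hle := hmax j (Finset.mem_of_mem_erase hj)
    have hne : keyE (j : ES n) ≠ keyE (m : ES n) := by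
      intro hc
      exact hjm (Subtype.ext (keyE_inj hc))
    exact lt_of_le_of_ne hle hne
  exact m.2 hym

lemma spanCS : ⊤ ≤ Submodule.span ℚ (Set.range fun c : CS n => y (c : ES n)) := by
  rw [← Set.image_eq_range]
  have h1 : Set.range (Pi.basisFun ℚ (Equiv.Perm (Fin n))) ⊆
      ↑(Submodule.span ℚ (y '' (CS n))) := by
    rintro _ ⟨τ, rfl⟩
    rw [Pi.basisFun_apply, ← y_single τ]
    have h2 := claim1 n (Finset.univ.filter (fun p : Fin n × Fin n => τ p.1 < τ p.2))
    exact Submodule.span_mono (Set.image_mono fun E h => h.1) h2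
  calc (⊤ : Submodule ℚ (Equiv.Perm (Fin n) → ℚ))
      = Submodule.span ℚ (Set.range (Pi.basisFun ℚ (Equiv.Perm (Fin n)))) :=
        (Module.Basis.span_eq _).symm
    _ ≤ Submodule.span ℚ (y '' (CS n)) := Submodule.span_le.mpr h1

noncomputable instance : Fintype (CS n) := Fintype.ofFinite _

/-- The greedy basis indexed by the chosen edge sets. -/
noncomputable def bCS : Module.Basis (CS n) ℚ (Equiv.Perm (Fin n) → ℚ) :=
  Module.Basis.mk (indepCS n) (spanCS n)

lemma cardCS : Fintype.card (Equiv.Perm (Fin n)) = Fintype.card (CS n) := by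
  have h1 := Module.finrank_eq_card_basis (bCS n)
  have h2 : Module.finrank ℚ (Equiv.Perm (Fin n) → ℚ)
      = Fintype.card (Equiv.Perm (Fin n)) := Module.finrank_pi ℚ
  rw [h2] at h1
  exact h1

/-- Transport index set to permutations. -/
noncomputable def eCS : Equiv.Perm (Fin n) ≃ CS n := Fintype.equivOfCardEq (cardCS n)

noncomputable def bP : Module.Basis (Equiv.Perm (Fin n)) ℚ (Equiv.Perm (Fin n) → ℚ) :=
  (bCS n).reindex (eCS n).symm

lemma bP_apply (P : Equiv.Perm (Fin n)) : bP n P = y ((eCS n P : ES n)) := by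
  rw [bP, Module.Basis.reindex_apply, Equiv.symm_symm]
  exact Module.Basis.mk_apply _ _ _

lemma repr_eq_zero_of_span {P : Equiv.Perm (Fin n)} {S : Set (Equiv.Perm (Fin n))}
    (hP : P ∉ S) {v : Equiv.Perm (Fin n) → ℚ}
    (hv : v ∈ Submodule.span ℚ (⇑(bP n) '' S)) : (bP n).repr v P = 0 := by
  have hsupp := (Module.Basis.mem_span_image (bP n)).mp hv
  by_contra h
  exact hP (hsupp (Finsupp.mem_support_iff.mpr h))

/-- Transfer span membership from monomials to basis vectors. -/
lemma y_span_sub (E : ES n) :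
    Submodule.span ℚ (y '' {E' | E' ∈ CS n ∧ keyE E' ≤ keyE E}) ≤
    Submodule.span ℚ (⇑(bP n) '' {R | keyE ((eCS n R : ES n)) ≤ keyE E}) := by
  rw [Submodule.span_le]
  rintro _ ⟨E', ⟨hC, hle⟩, rfl⟩
  apply Submodule.subset_span
  refine ⟨(eCS n).symm ⟨E', hC⟩, ?_, ?_⟩
  · show keyE ((eCS n ((eCS n).symm ⟨E', hC⟩) : ES n)) ≤ keyE E
    rw [Equiv.apply_symm_apply]
    exact hle
  · rw [bP_apply, Equiv.apply_symm_apply]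

end AntichainAux

open AntichainAux

/-- There is a single invertible rational matrix `U` and a single linear ordering of the
set of linear orders on the `n`-element antichain such that for every filter `F` the
conjugate `U · M_F · U⁻¹` is upper triangular with integer diagonal entries. -/
theorem antichain_simultaneous_triangularization (n : ℕ) :
    ∃ (U V : Matrix (Equiv.Perm (Fin n)) (Equiv.Perm (Fin n)) ℚ)
      (r : LinearOrder (Equiv.Perm (Fin n))),
      U * V = 1 ∧ V * U = 1 ∧
      ∀ (k : ℕ) (F : Fin n → Fin k), Function.Surjective F →
        (∀ P Q : Equiv.Perm (Fin n), r.lt Q P → (U * AMat F * V) P Q = 0) ∧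
        (∀ P : Equiv.Perm (Fin n), ∃ z : ℤ, (U * AMat F * V) P P = (z : ℚ)) := by
  classical
  set std := Pi.basisFun ℚ (Equiv.Perm (Fin n)) with hstd
  have _bdummy : True := trivial
  have hinj : Function.Injective (fun P : Equiv.Perm (Fin n) => keyE ((eCS n P : ES n))) := by
    intro P Q h
    exact (eCS n).injective (Subtype.ext (keyE_inj h))
  have key_eq : ∀ (k : ℕ) (F : Fin n → Fin k),
      LinearMap.toMatrix std (bP n) LinearMap.id * AMat F * LinearMap.toMatrix (bP n) std LinearMap.id
        = LinearMap.toMatrix (bP n) (bP n) (TF F) := by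
    intro k F
    rw [AMat_eq_toMatrix, ← hstd]
    rw [← LinearMap.toMatrix_comp std std (bP n) LinearMap.id (TF F)]
    rw [← LinearMap.toMatrix_comp (bP n) std (bP n) (LinearMap.id.comp (TF F)) LinearMap.id]
    simp only [LinearMap.id_comp, LinearMap.comp_id]
  refine ⟨LinearMap.toMatrix std (bP n) LinearMap.id, LinearMap.toMatrix (bP n) std LinearMap.id,
    LinearOrder.lift' (fun P : Equiv.Perm (Fin n) => keyE ((eCS n P : ES n))) hinj,
    ?_, ?_, ?_⟩
  · rw [← LinearMap.toMatrix_comp (bP n) std (bP n) LinearMap.id LinearMap.id, LinearMap.id_comp,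
      LinearMap.toMatrix_id]
  · rw [← LinearMap.toMatrix_comp std (bP n) std LinearMap.id LinearMap.id, LinearMap.id_comp,
      LinearMap.toMatrix_id]
  · intro k F _hF
    constructor
    · intro P Q hlt
      have hlt' : keyE ((eCS n Q : ES n)) < keyE ((eCS n P : ES n)) := hlt
      rw [key_eq, LinearMap.toMatrix_apply, bP_apply]
      by_cases hz : ∃ p ∈ ((eCS n Q : ES n)), F p.2 < F p.1
      · obtain ⟨p, hp, hplt⟩ := hz
        rw [TF_y_zero F _ hp hplt]
        simp
      · have hz' : ∀ p ∈ ((eCS n Q : ES n)), ¬ F p.2 < F p.1 :=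
          fun p hp hc => hz ⟨p, hp, hc⟩
        rw [TF_y_filter F _ hz']
        set E' := ((eCS n Q : ES n)).filter (fun p => F p.1 = F p.2) with hE'
        have hkle : keyE E' ≤ keyE ((eCS n Q : ES n)) :=
          keyE_le_of_subset (Finset.filter_subset _ _)
        apply repr_eq_zero_of_span n (S := {R | keyE ((eCS n R : ES n)) ≤ keyE E'})
        · intro hc
          exact absurd (lt_of_lt_of_le hlt' hc) (not_lt.mpr hkle)
        · exact y_span_sub n E' (claim1 n E')
    · intro P
      rw [key_eq, LinearMap.toMatrix_apply, bP_apply]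
      by_cases hz : ∃ p ∈ ((eCS n P : ES n)), F p.2 < F p.1
      · refine ⟨0, ?_⟩
        obtain ⟨p, hp, hplt⟩ := hz
        rw [TF_y_zero F _ hp hplt]
        simp
      · have hz' : ∀ p ∈ ((eCS n P : ES n)), ¬ F p.2 < F p.1 :=
          fun p hp hc => hz ⟨p, hp, hc⟩
        rw [TF_y_filter F _ hz']
        set E' := ((eCS n P : ES n)).filter (fun p => F p.1 = F p.2) with hE'
        by_cases heq : E' = ((eCS n P : ES n))
        · refine ⟨1, ?_⟩
          rw [heq, ← bP_apply, Module.Basis.repr_self]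
          simp
        · refine ⟨0, ?_⟩
          have hssub : E' ⊂ ((eCS n P : ES n)) :=
            lt_of_le_of_ne (Finset.filter_subset _ _) heq
          have hklt : keyE E' < keyE ((eCS n P : ES n)) := keyE_lt_of_ssubset hssub
          have h0 : (bP n).repr (y E') P = 0 := by
            apply repr_eq_zero_of_span n (S := {R | keyE ((eCS n R : ES n)) ≤ keyE E'})
            · intro hc
              exact absurd (lt_of_lt_of_le hklt hc) (lt_irrefl _)
            · exact y_span_sub n E' (claim1 n E')
          rw [h0]
          simp
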